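/- arXiv:1304.0498 — 5 statements merged into one kernel-verified Lean document; each statement's English description precedes it below -/
import Mathlib

section
/- For a free group F of finite rank r and all integers m, n ≥ 1, the commutator subgroup generated by commutators of elements of A_m and A_n is contained in A_{m+n}; that is, [A_m, A_n] ≤ A_{m+n}. In particular, (A_n)_{n≥1} is a central filtration of A_1. -/
open scoped commutatorElement

section Aux

variable {G : Type*} [Group G]

theorem lcs_succ' (n : ℕ) :
    (⊤ : Subgroup G).lowerCentralSeries (n + 1) = ⁅(⊤ : Subgroup G).lowerCentralSeries n, (⊤ : Subgroup G)⁆ := rfl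

/-- Three subgroups lemma modulo a normal subgroup. -/
theorem three_subgroups_aux {H₁ H₂ H₃ N : Subgroup G} [N.Normal]
    (h1 : ⁅⁅H₂, H₃⁆, H₁⁆ ≤ N) (h2 : ⁅⁅H₃, H₁⁆, H₂⁆ ≤ N) : ⁅⁅H₁, H₂⁆, H₃⁆ ≤ N := by
  have key : ∀ K : Subgroup G, K ≤ N ↔ Subgroup.map (QuotientGroup.mk' N) K = ⊥ := by
    intro K
    rw [Subgroup.map_eq_bot_iff, QuotientGroup.ker_mk']
  rw [key] at h1 h2 ⊢
  rw [Subgroup.map_commutator, Subgroup.map_commutator] at h1 h2 ⊢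
  exact Subgroup.commutator_commutator_eq_bot_of_rotate h1 h2

theorem lcs_comm_le (a b : ℕ) :
    ⁅(⊤ : Subgroup G).lowerCentralSeries a, (⊤ : Subgroup G).lowerCentralSeries b⁆ ≤ (⊤ : Subgroup G).lowerCentralSeries (a + b + 1) := by
  induction b generalizing a with
  | zero =>
    rw [Subgroup.lowerCentralSeries_zero]
    simpa using (lcs_succ' a).ge
  | succ b ih =>
    rw [lcs_succ' b, Subgroup.commutator_comm]
    have h1 : ⁅⁅(⊤ : Subgroup G), (⊤ : Subgroup G).lowerCentralSeries a⁆, (⊤ : Subgroup G).lowerCentralSeries b⁆ ≤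
        (⊤ : Subgroup G).lowerCentralSeries (a + (b + 1) + 1) := by
      have e1 : ⁅(⊤ : Subgroup G), (⊤ : Subgroup G).lowerCentralSeries a⁆ = (⊤ : Subgroup G).lowerCentralSeries (a + 1) := by
        rw [Subgroup.commutator_comm, ← lcs_succ']
      rw [e1]
      have := ih (a + 1)
      have e : a + 1 + b + 1 = a + (b + 1) + 1 := by omega
      rwa [e] at this
    have h2 : ⁅⁅(⊤ : Subgroup G).lowerCentralSeries a, (⊤ : Subgroup G).lowerCentralSeries b⁆, (⊤ : Subgroup G)⁆ ≤
        (⊤ : Subgroup G).lowerCentralSeries (a + (b + 1) + 1) := by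
      have := Subgroup.commutator_mono (ih a) (le_refl (⊤ : Subgroup G))
      rw [← lcs_succ'] at this
      have e : a + b + 1 + 1 = a + (b + 1) + 1 := by omega
      rwa [e] at this
    exact three_subgroups_aux h1 h2

theorem aut_mem_lcs {j : ℕ} (φ : MulAut G) {h : G} (hh : h ∈ (⊤ : Subgroup G).lowerCentralSeries j) :
    φ h ∈ (⊤ : Subgroup G).lowerCentralSeries j :=
  Subgroup.characteristic_iff_le_comap.mp inferInstance φ hh

/-- pure group identity used below -/
theorem comm_aux {Q : Type*} [Group Q] (X Y U V : Q) (hU : ∀ q, U * q = q * U)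
    (hXV : X * V = V * X) : ⁅X * U, Y * V⁆ = ⁅X, Y⁆ := by
  have hXiV : X⁻¹ * V = V * X⁻¹ := (Commute.inv_left hXV).eq
  calc (X * U) * (Y * V) * (X * U)⁻¹ * (Y * V)⁻¹
      = X * (U * (Y * V) * U⁻¹) * X⁻¹ * (Y * V)⁻¹ := by group
    _ = X * (Y * V) * X⁻¹ * (Y * V)⁻¹ := by rw [hU (Y * V), mul_inv_cancel_right]
    _ = X * Y * (V * X⁻¹) * (V⁻¹ * Y⁻¹) := by group
    _ = X * Y * (X⁻¹ * V) * (V⁻¹ * Y⁻¹) := by rw [← hXiV]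
    _ = ⁅X, Y⁆ := by group

/-- Key lemma: if `φ` is the identity modulo `γ m`, then it is the identity on
`γ j` modulo `γ (j + m)`. -/
theorem lemA (m : ℕ) (φ : MulAut G)
    (hφ : ∀ g : G, g⁻¹ * φ g ∈ (⊤ : Subgroup G).lowerCentralSeries m) :
    ∀ j : ℕ, ∀ h ∈ (⊤ : Subgroup G).lowerCentralSeries j, h⁻¹ * φ h ∈ (⊤ : Subgroup G).lowerCentralSeries (j + m) := by
  intro j
  induction j with
  | zero => intro h _; simpa using hφ h
  | succ j ih =>
    set N := (⊤ : Subgroup G).lowerCentralSeries (j + 1 + m) with hN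
    have hNnormal : N.Normal := inferInstance
    let T : Subgroup G :=
      { carrier := { h | h⁻¹ * φ h ∈ N }
        one_mem' := by simp [Set.mem_setOf_eq]
        mul_mem' := by
          intro p q hp hq
          have key : (p * q)⁻¹ * φ (p * q)
              = q⁻¹ * (p⁻¹ * φ p) * q * (q⁻¹ * φ q) := by
            rw [map_mul]; group
          show (p * q)⁻¹ * φ (p * q) ∈ N
          rw [key]
          exact mul_mem (hNnormal.conj_mem' _ hp q) hq
        inv_mem' := by
          intro p hp
          show (p⁻¹)⁻¹ * φ p⁻¹ ∈ N
          have key : (p⁻¹)⁻¹ * φ p⁻¹ = p * (p⁻¹ * φ p)⁻¹ * p⁻¹ := by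
            rw [map_inv]; group
          rw [key]
          exact hNnormal.conj_mem _ (inv_mem hp) p }
    have hle : (⊤ : Subgroup G).lowerCentralSeries (j + 1) ≤ T := by
      rw [lcs_succ', Subgroup.commutator_le]
      intro x hx y _
      show ⁅x, y⁆⁻¹ * φ ⁅x, y⁆ ∈ N
      obtain ⟨u, hum, hφx⟩ : ∃ u, u ∈ (⊤ : Subgroup G).lowerCentralSeries (j + m) ∧ φ x = x * u :=
        ⟨x⁻¹ * φ x, ih x hx, by group⟩
      obtain ⟨v, hvm, hφy⟩ : ∃ v, v ∈ (⊤ : Subgroup G).lowerCentralSeries m ∧ φ y = y * v :=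
        ⟨y⁻¹ * φ y, hφ y, by group⟩
      rw [← QuotientGroup.eq_one_iff (N := N)]
      have expand : φ ⁅x, y⁆ = ⁅x * u, y * v⁆ := by
        rw [map_commutatorElement, hφx, hφy]
      push_cast [expand]
      set π := QuotientGroup.mk' N with hπ
      have hUc : ∀ q : G ⧸ N, (π u) * q = q * (π u) := by
        intro q
        obtain ⟨z, rfl⟩ := QuotientGroup.mk'_surjective N q
        rw [← commutatorElement_eq_one_iff_mul_comm, ← map_commutatorElement]
        rw [QuotientGroup.mk'_apply, QuotientGroup.eq_one_iff]
        have : ⁅u, z⁆ ∈ ⁅(⊤ : Subgroup G).lowerCentralSeries (j + m), (⊤ : Subgroup G)⁆ :=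
          Subgroup.commutator_mem_commutator hum (Subgroup.mem_top z)
        rw [← lcs_succ'] at this
        have e : j + m + 1 = j + 1 + m := by omega
        rwa [e] at this
      have hXVc : (π x) * (π v) = (π v) * (π x) := by
        rw [← commutatorElement_eq_one_iff_mul_comm, ← map_commutatorElement]
        rw [QuotientGroup.mk'_apply, QuotientGroup.eq_one_iff]
        have : ⁅x, v⁆ ∈ ⁅(⊤ : Subgroup G).lowerCentralSeries j, (⊤ : Subgroup G).lowerCentralSeries m⁆ :=
          Subgroup.commutator_mem_commutator hx hvm
        have := lcs_comm_le j m this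
        have e : j + m + 1 = j + 1 + m := by omega
        rwa [e] at this
      have : π (⁅x, y⁆⁻¹ * ⁅x * u, y * v⁆) = 1 := by
        rw [map_mul, map_inv, map_commutatorElement, map_commutatorElement,
          map_mul, map_mul]
        rw [comm_aux (π x) (π y) (π u) (π v) hUc hXVc]
        group
      simpa [hπ] using this
    intro h hh
    exact hle hh

end Aux

def Andre (r n : ℕ) : Subgroup (MulAut (FreeGroup (Fin r))) where
  carrier := { φ | ∀ g : FreeGroup (Fin r),
      g⁻¹ * φ g ∈ (⊤ : Subgroup (FreeGroup (Fin r))).lowerCentralSeries n }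
  one_mem' := by
    intro g
    simp
  mul_mem' := by
    intro φ ψ hφ hψ g
    have key : g⁻¹ * (φ * ψ) g = (g⁻¹ * ψ g) * ((ψ g)⁻¹ * φ (ψ g)) := by
      rw [MulAut.mul_apply]; group
    rw [key]
    exact mul_mem (hψ g) (hφ (ψ g))
  inv_mem' := by
    intro φ hφ g
    have h := hφ (φ⁻¹ g)
    rw [show φ (φ⁻¹ g) = g from φ.apply_symm_apply g] at h
    have h2 := inv_mem h
    simpa [mul_inv_rev] using h2

/-- `[A_m, A_n] ≤ A_{m+n}`: the Andreadakis subgroups form a central filtration. -/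
theorem andre_commutator_le (r m n : ℕ) (hm : 1 ≤ m) (hn : 1 ≤ n) :
    ⁅Andre r m, Andre r n⁆ ≤ Andre r (m + n) := by
  rw [Subgroup.commutator_le]
  intro φ hφ ψ hψ
  intro g
  have hφ' : ∀ g, g⁻¹ * φ g ∈ (⊤ : Subgroup (FreeGroup (Fin r))).lowerCentralSeries m := hφ
  have hψ' : ∀ g, g⁻¹ * ψ g ∈ (⊤ : Subgroup (FreeGroup (Fin r))).lowerCentralSeries n := hψ
  set h := φ⁻¹ (ψ⁻¹ g) with hh
  set a := h⁻¹ * φ h with ha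
  set b := h⁻¹ * ψ h with hb
  have ham : a ∈ (⊤ : Subgroup (FreeGroup (Fin r))).lowerCentralSeries m := hφ' h
  have hbn : b ∈ (⊤ : Subgroup (FreeGroup (Fin r))).lowerCentralSeries n := hψ' h
  have ha2 : a⁻¹ * ψ a ∈ (⊤ : Subgroup (FreeGroup (Fin r))).lowerCentralSeries (m + n) :=
    lemA n ψ hψ' m a ham
  have hb2 : b⁻¹ * φ b ∈ (⊤ : Subgroup (FreeGroup (Fin r))).lowerCentralSeries (m + n) := by
    have := lemA m φ hφ' n b hbn
    rwa [Nat.add_comm n m] at this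
  have hcomm : ⁅a⁻¹, b⁻¹⁆ ∈ (⊤ : Subgroup (FreeGroup (Fin r))).lowerCentralSeries (m + n) := by
    have : ⁅a⁻¹, b⁻¹⁆ ∈ ⁅(⊤ : Subgroup (FreeGroup (Fin r))).lowerCentralSeries m,
        (⊤ : Subgroup (FreeGroup (Fin r))).lowerCentralSeries n⁆ :=
      Subgroup.commutator_mem_commutator (inv_mem ham) (inv_mem hbn)
    exact Subgroup.lowerCentralSeries_antitone (S := ⊤) (show m + n ≤ m + n + 1 by omega) (lcs_comm_le m n this)
  have hg : g = ψ (φ h) := by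
    rw [hh, show φ (φ⁻¹ (ψ⁻¹ g)) = ψ⁻¹ g from φ.apply_symm_apply _,
      show ψ (ψ⁻¹ g) = g from ψ.apply_symm_apply g]
  have happ : ⁅φ, ψ⁆ g = φ (ψ h) := by
    rw [commutatorElement_def]
    rfl
  have key : g⁻¹ * ⁅φ, ψ⁆ g = (a⁻¹ * ψ a)⁻¹ * ⁅a⁻¹, b⁻¹⁆ * (b⁻¹ * φ b) := by
    rw [happ, hg]
    have hφh : φ h = h * a := by rw [ha]; group
    have hψh : ψ h = h * b := by rw [hb]; group
    rw [show ψ (φ h) = ψ h * ψ a by rw [hφh, map_mul],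
        show φ (ψ h) = φ h * φ b by rw [hψh, map_mul], hφh, hψh]
    group
  rw [key]
  exact mul_mem (mul_mem (inv_mem ha2) hcomm) hb2
end

section
/- For a free group F of finite rank r and every n ≥ 1, the n-th term γ_n(A_1) of the lower central series of A_1 is contained in A_n. -/
/-- The three subgroups lemma, relative to a normal subgroup `N`. -/
lemma aux_three_subgroups {G : Type*} [Group G] (A B C : Subgroup G) (N : Subgroup G)
    [N.Normal] (h1 : ⁅⁅B, C⁆, A⁆ ≤ N) (h2 : ⁅⁅C, A⁆, B⁆ ≤ N) : ⁅⁅A, B⁆, C⁆ ≤ N := by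
  set π := QuotientGroup.mk' N with hπ
  have key : ∀ X Y Z : Subgroup G,
      ⁅⁅X, Y⁆, Z⁆ ≤ N ↔ ⁅⁅X.map π, Y.map π⁆, Z.map π⁆ = ⊥ := by
    intro X Y Z
    rw [← Subgroup.map_commutator, ← Subgroup.map_commutator, eq_bot_iff,
      Subgroup.map_le_iff_le_comap, MonoidHom.comap_bot, QuotientGroup.ker_mk']
  rw [key] at h1 h2 ⊢
  exact Subgroup.commutator_commutator_eq_bot_of_rotate h1 h2

lemma lcs_succ_comm {G : Type*} [Group G] (n : ℕ) :
    (⊤ : Subgroup G).lowerCentralSeries (n + 1) = ⁅(⊤ : Subgroup G).lowerCentralSeries n, ⊤⁆ := rfl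

/-- `⁅γ_{m+1}, γ_{n+1}⁆ ≤ γ_{m+n+2}` (mathlib indexing). -/
lemma aux_lcs_comm {G : Type*} [Group G] :
    ∀ n m : ℕ, ⁅(⊤ : Subgroup G).lowerCentralSeries m, (⊤ : Subgroup G).lowerCentralSeries n⁆ ≤
      (⊤ : Subgroup G).lowerCentralSeries (m + n + 1) := by
  intro n
  induction n with
  | zero =>
    intro m
    rw [Subgroup.lowerCentralSeries_zero]
    exact le_of_eq (lcs_succ_comm m).symm
  | succ n ih =>
    intro m
    rw [lcs_succ_comm n, Subgroup.commutator_comm]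
    apply aux_three_subgroups
    · calc ⁅⁅(⊤ : Subgroup G), (⊤ : Subgroup G).lowerCentralSeries m⁆, (⊤ : Subgroup G).lowerCentralSeries n⁆
          = ⁅⁅(⊤ : Subgroup G).lowerCentralSeries m, ⊤⁆, (⊤ : Subgroup G).lowerCentralSeries n⁆ := by
            rw [Subgroup.commutator_comm ⊤]
        _ = ⁅(⊤ : Subgroup G).lowerCentralSeries (m + 1), (⊤ : Subgroup G).lowerCentralSeries n⁆ := by
            rw [← lcs_succ_comm]
        _ ≤ (⊤ : Subgroup G).lowerCentralSeries (m + 1 + n + 1) := ih (m + 1)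
        _ = (⊤ : Subgroup G).lowerCentralSeries (m + (n + 1) + 1) := by ring_nf
    · calc ⁅⁅(⊤ : Subgroup G).lowerCentralSeries m, (⊤ : Subgroup G).lowerCentralSeries n⁆, (⊤ : Subgroup G)⁆
          ≤ ⁅(⊤ : Subgroup G).lowerCentralSeries (m + n + 1), (⊤ : Subgroup G)⁆ :=
            Subgroup.commutator_mono (ih m) le_rfl
        _ = (⊤ : Subgroup G).lowerCentralSeries (m + n + 2) := (lcs_succ_comm (m + n + 1)).symm
        _ = (⊤ : Subgroup G).lowerCentralSeries (m + (n + 1) + 1) := by ring_nf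

open scoped commutatorElement

/-- If `φ ∈ A_m` and `g ∈ γ_{k+1}` then `g⁻¹ φ(g) ∈ γ_{k+m+1}` (mathlib indexing). -/
lemma aux_A {G : Type*} [Group G] (φ : MulAut G) (m : ℕ)
    (hφ : ∀ g : G, g⁻¹ * φ g ∈ (⊤ : Subgroup G).lowerCentralSeries m) :
    ∀ k : ℕ, ∀ g ∈ (⊤ : Subgroup G).lowerCentralSeries k, g⁻¹ * φ g ∈ (⊤ : Subgroup G).lowerCentralSeries (k + m) := by
  intro k
  induction k with
  | zero => intro g _; simpa [Nat.zero_add] using hφ g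
  | succ k ih =>
    intro g hg
    rw [lcs_succ_comm, Subgroup.commutator_def] at hg
    rw [show k + 1 + m = k + m + 1 from add_right_comm k 1 m]
    induction hg using Subgroup.closure_induction with
    | mem x hx =>
      obtain ⟨x₁, hx₁, x₂, -, rfl⟩ := hx
      have ha : x₁⁻¹ * φ x₁ ∈ (⊤ : Subgroup G).lowerCentralSeries (k + m) := ih x₁ hx₁
      have hb : x₂⁻¹ * φ x₂ ∈ (⊤ : Subgroup G).lowerCentralSeries m := hφ x₂
      have key : ⁅x₁, x₂⁆⁻¹ * φ ⁅x₁, x₂⁆ =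
          (⁅x₁, x₂⁆⁻¹ * (x₁ * ⁅x₁⁻¹ * φ x₁, x₂ * (x₂⁻¹ * φ x₂)⁆ * x₁⁻¹) * ⁅x₁, x₂⁆) *
            (x₂ * ⁅x₁, x₂⁻¹ * φ x₂⁆ * x₂⁻¹) := by
        simp only [commutatorElement_def, map_mul, map_inv]
        group
      rw [key]
      have hN : ((⊤ : Subgroup G).lowerCentralSeries (k + m + 1)).Normal := inferInstance
      have h1 : ⁅x₁⁻¹ * φ x₁, x₂ * (x₂⁻¹ * φ x₂)⁆ ∈ (⊤ : Subgroup G).lowerCentralSeries (k + m + 1) := by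
        rw [lcs_succ_comm]
        exact Subgroup.commutator_mem_commutator ha (Subgroup.mem_top _)
      have h2 : ⁅x₁, x₂⁻¹ * φ x₂⁆ ∈ (⊤ : Subgroup G).lowerCentralSeries (k + m + 1) :=
        aux_lcs_comm m k (Subgroup.commutator_mem_commutator hx₁ hb)
      exact mul_mem
        (by simpa using hN.conj_mem _ (hN.conj_mem _ h1 x₁) ⁅x₁, x₂⁆⁻¹)
        (hN.conj_mem _ h2 x₂)
    | one => simpa using ((⊤ : Subgroup G).lowerCentralSeries (k + m + 1)).one_mem
    | mul x y hx hy px py =>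
      have key : (x * y)⁻¹ * φ (x * y) =
          (y⁻¹ * (x⁻¹ * φ x) * y) * (y⁻¹ * φ y) := by
        simp only [map_mul]; group
      rw [key]
      have hN : ((⊤ : Subgroup G).lowerCentralSeries (k + m + 1)).Normal := inferInstance
      exact mul_mem (by simpa using hN.conj_mem _ px y⁻¹) py
    | inv x hx px =>
      have key : (x⁻¹)⁻¹ * φ x⁻¹ = x * (x⁻¹ * φ x)⁻¹ * x⁻¹ := by
        simp only [map_inv]; group
      rw [key]
      have hN : ((⊤ : Subgroup G).lowerCentralSeries (k + m + 1)).Normal := inferInstance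
      exact hN.conj_mem _ (inv_mem px) x

/-- If `φ ∈ A_m` and `ψ ∈ A_n` then `⁅φ, ψ⁆ ∈ A_{m+n}`. -/
lemma aux_B {G : Type*} [Group G] (φ ψ : MulAut G) (m n : ℕ)
    (hφ : ∀ g : G, g⁻¹ * φ g ∈ (⊤ : Subgroup G).lowerCentralSeries m)
    (hψ : ∀ g : G, g⁻¹ * ψ g ∈ (⊤ : Subgroup G).lowerCentralSeries n) (g : G) :
    g⁻¹ * ⁅φ, ψ⁆ g ∈ (⊤ : Subgroup G).lowerCentralSeries (m + n) := by
  obtain ⟨h, rfl⟩ : ∃ h : G, ψ (φ h) = g := ⟨φ⁻¹ (ψ⁻¹ g), by simp [MulAut.inv_def]⟩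
  have expand : ⁅φ, ψ⁆ (ψ (φ h)) = φ (ψ h) := by
    simp [commutatorElement_def, MulAut.mul_apply, MulAut.inv_def]
  rw [expand]
  have ha : h⁻¹ * φ h ∈ (⊤ : Subgroup G).lowerCentralSeries m := hφ h
  have hb : h⁻¹ * ψ h ∈ (⊤ : Subgroup G).lowerCentralSeries n := hψ h
  have hu : (h⁻¹ * φ h)⁻¹ * ψ (h⁻¹ * φ h) ∈ (⊤ : Subgroup G).lowerCentralSeries (m + n) :=
    aux_A ψ n hψ m _ ha
  have hv : (h⁻¹ * ψ h)⁻¹ * φ (h⁻¹ * ψ h) ∈ (⊤ : Subgroup G).lowerCentralSeries (m + n) := by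
    rw [add_comm m n]; exact aux_A φ m hφ n _ hb
  have hc : ⁅(h⁻¹ * φ h)⁻¹, (h⁻¹ * ψ h)⁻¹⁆ ∈ (⊤ : Subgroup G).lowerCentralSeries (m + n) :=
    (⊤ : Subgroup G).lowerCentralSeries_antitone (Nat.le_succ _)
      (aux_lcs_comm n m (Subgroup.commutator_mem_commutator (inv_mem ha) (inv_mem hb)))
  have key : (ψ (φ h))⁻¹ * φ (ψ h) =
      ((h⁻¹ * φ h)⁻¹ * ψ (h⁻¹ * φ h))⁻¹ * ⁅(h⁻¹ * φ h)⁻¹, (h⁻¹ * ψ h)⁻¹⁆ *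
        ((h⁻¹ * ψ h)⁻¹ * φ (h⁻¹ * ψ h)) := by
    simp only [commutatorElement_def, map_mul, map_inv]
    group
  rw [key]
  exact mul_mem (mul_mem (inv_mem hu) hc) hv

lemma aux_main (r : ℕ) : ∀ k : ℕ,
    ((⊤ : Subgroup ↥(Andre r 1)).lowerCentralSeries k).map (Andre r 1).subtype ≤ Andre r (k + 1) := by
  intro k
  induction k with
  | zero =>
    rw [Subgroup.lowerCentralSeries_zero, ← MonoidHom.range_eq_map, Subgroup.subtype_range]
  | succ k ih =>
    rw [lcs_succ_comm, Subgroup.map_commutator]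
    have htop : (⊤ : Subgroup ↥(Andre r 1)).map (Andre r 1).subtype = Andre r 1 := by
      rw [← MonoidHom.range_eq_map, Subgroup.subtype_range]
    rw [htop]
    refine le_trans (Subgroup.commutator_mono ih le_rfl) ?_
    rw [Subgroup.commutator_le]
    intro φ hφ ψ hψ
    exact aux_B φ ψ (k + 1) 1 hφ hψ

/-- `γ_n(A_1) ≤ A_n`. Here `γ_n(A_1) = (⊤ : Subgroup ↥(Andre r 1)).lowerCentralSeries (n-1)`,
viewed inside `Aut(F)` via the inclusion of `A_1`. -/
theorem lowerCentralSeries_A1_le_andre (r n : ℕ) (hn : 1 ≤ n) :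
    ((⊤ : Subgroup ↥(Andre r 1)).lowerCentralSeries (n - 1)).map (Andre r 1).subtype ≤ Andre r n := by
  have h : n = (n - 1) + 1 := (Nat.succ_pred_eq_of_pos hn).symm
  rw [h]
  exact aux_main r (n - 1)
end

section
/- Let F be the free group on two generators x, y. The endomorphism φ of F determined by φ(x) = x·[[x,y],[[x,y],y]] and φ(y) = y is not an automorphism of F (it is not surjective). -/
namespace BGLMExample

/-- The generator `x` of the free group of rank 2. -/
def x : FreeGroup (Fin 2) := FreeGroup.of 0

/-- The generator `y` of the free group of rank 2. -/
def y : FreeGroup (Fin 2) := FreeGroup.of 1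

/-- The commutator `[u,v] = u⁻¹v⁻¹uv`. -/
def c (u v : FreeGroup (Fin 2)) : FreeGroup (Fin 2) := u⁻¹ * v⁻¹ * u * v

/-- The endomorphism `φ` of `F = ⟨x,y⟩` with `φ(x) = x·[[x,y],[[x,y],y]]` and
`φ(y) = y`. -/
def φ : FreeGroup (Fin 2) →* FreeGroup (Fin 2) :=
  FreeGroup.lift (fun i : Fin 2 =>
    if i = 0 then x * c (c x y) (c (c x y) y) else y)

/-- The permutation `(0 1)` of `Fin 4`. -/
def pa : Equiv.Perm (Fin 4) := ⟨![1, 0, 2, 3], ![1, 0, 2, 3], by decide, by decide⟩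

/-- The permutation `(1 2 3)` of `Fin 4`. -/
def pb : Equiv.Perm (Fin 4) := ⟨![0, 2, 3, 1], ![0, 3, 1, 2], by decide, by decide⟩

/-- The homomorphism `F → S₄` sending `x ↦ pa`, `y ↦ pb`. -/
def f : FreeGroup (Fin 2) →* Equiv.Perm (Fin 4) :=
  FreeGroup.lift (fun i : Fin 2 => if i = 0 then pa else pb)

lemma f_x : f x = pa := by simp [f, x]

lemma f_y : f y = pb := by simp [f, y]

lemma key : ∀ z : FreeGroup (Fin 2), (f (φ z)) 0 = 0 := by
  intro z
  induction z using FreeGroup.induction_on with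
  | C1 => simp
  | of i =>
    fin_cases i
    · show (f (φ (FreeGroup.of 0))) 0 = 0
      have : φ (FreeGroup.of 0) = x * c (c x y) (c (c x y) y) := by
        simp [φ]
      rw [this]
      simp only [c, map_mul, map_inv, f_x, f_y]
      decide
    · show (f (φ (FreeGroup.of 1))) 0 = 0
      have : φ (FreeGroup.of 1) = y := by simp [φ]
      rw [this, f_y]
      decide
  | inv_of i h =>
    rw [map_inv, map_inv]
    exact Equiv.Perm.inv_eq_iff_eq.mpr h.symm
  | mul u v hu hv =>
    rw [map_mul, map_mul, Equiv.Perm.mul_apply, hv, hu]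

lemma not_surj : ¬ Function.Surjective ⇑φ := by
  intro h
  obtain ⟨g, hg⟩ := h x
  have h1 : (f (φ g)) 0 = 0 := key g
  rw [hg, f_x] at h1
  exact absurd h1 (by decide)

/-- The endomorphism `x ↦ x·[[x,y],[[x,y],y]]`, `y ↦ y` of the free group of
rank 2 is not an automorphism: it is not surjective. -/
theorem phi_not_automorphism :
    ¬ Function.Surjective ⇑φ ∧
    ¬ ∃ e : FreeGroup (Fin 2) ≃* FreeGroup (Fin 2), ∀ g, e g = φ g := by
  refine ⟨not_surj, ?_⟩
  rintro ⟨e, he⟩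
  apply not_surj
  intro z
  obtain ⟨g, hg⟩ := e.surjective z
  exact ⟨g, by rw [← he g, hg]⟩

end BGLMExample
end

section
/- Let n be a positive integer and ℓ a positive divisor of n. Then φ(ℓ) · ∑_{d : ℓ ∣ d ∣ n} μ(d)·(n/d) = μ(ℓ)·φ(n), where the sum ranges over all divisors d of n that are multiples of ℓ, μ denotes the Möbius function and φ denotes the Euler totient function. -/
open ArithmeticFunction Finset

noncomputable def hfun (ℓ : ℕ) : ArithmeticFunction ℚ :=
  ⟨fun m => if Nat.Coprime m ℓ then (moebius m : ℚ) else 0, by simp⟩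

@[simp] lemma hfun_apply (ℓ m : ℕ) :
    hfun ℓ m = if Nat.Coprime m ℓ then (moebius m : ℚ) else 0 := rfl

lemma hfun_mult (ℓ : ℕ) : (hfun ℓ).IsMultiplicative := by
  constructor
  · simp
  · intro m n hmn
    simp only [hfun_apply, Nat.coprime_mul_iff_left]
    split_ifs with h h1 h2 <;> try simp <;> tauto
    push_cast [isMultiplicative_moebius.map_mul_of_coprime hmn]; ring

noncomputable def ffun (ℓ : ℕ) : ArithmeticFunction ℚ :=
  hfun ℓ * ((ArithmeticFunction.id : ArithmeticFunction ℕ) : ArithmeticFunction ℚ)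

lemma ffun_mult (ℓ : ℕ) : (ffun ℓ).IsMultiplicative :=
  (hfun_mult ℓ).mul isMultiplicative_id.natCast

lemma ffun_apply (ℓ k : ℕ) :
    ffun ℓ k = ∑ d ∈ k.divisors, hfun ℓ d * (k / d : ℕ) := by
  rw [ffun, mul_apply, ← Nat.sum_divisorsAntidiagonal (fun a b => hfun ℓ a * (b : ℕ))]
  simp

lemma key_tot (ℓ m n : ℕ) (hℓ : 0 < ℓ) (hmn : Nat.Coprime m n) :
    (Nat.totient (ℓ * (m * n)) : ℚ) * Nat.totient ℓ
      = Nat.totient (ℓ * m) * Nat.totient (ℓ * n) := by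
  rcases Nat.eq_zero_or_pos m with rfl | hm
  · have : n = 1 := by simpa [Nat.coprime_zero_left] using hmn
    simp [this]
  rcases Nat.eq_zero_or_pos n with rfl | hn
  · have : m = 1 := by simpa [Nat.coprime_zero_right] using hmn
    simp [this]
  have hg : Nat.gcd (ℓ * m) n = Nat.gcd ℓ n := by
    rw [mul_comm]
    exact Nat.Coprime.gcd_mul_left_cancel ℓ hmn
  have A := Nat.totient_gcd_mul_totient_mul (ℓ * m) n
  rw [hg] at A
  have B := Nat.totient_gcd_mul_totient_mul ℓ n
  have A' : (Nat.totient (Nat.gcd ℓ n) : ℚ) * Nat.totient (ℓ * m * n)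
      = Nat.totient (ℓ * m) * Nat.totient n * Nat.gcd ℓ n := by exact_mod_cast A
  have B' : (Nat.totient (Nat.gcd ℓ n) : ℚ) * Nat.totient (ℓ * n)
      = Nat.totient ℓ * Nat.totient n * Nat.gcd ℓ n := by exact_mod_cast B
  have hgq : (Nat.totient (Nat.gcd ℓ n) : ℚ) ≠ 0 := by
    have : 0 < Nat.totient (Nat.gcd ℓ n) := by
      simp [Nat.gcd_pos_of_pos_left _ hℓ]
    positivity
  rw [← mul_assoc]
  apply mul_left_cancel₀ hgq
  linear_combination ((Nat.totient ℓ : ℚ)) * A' - (Nat.totient (ℓ * m) : ℚ) * B'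

noncomputable def gfun (ℓ : ℕ) : ArithmeticFunction ℚ :=
  ⟨fun k => if k = 0 then 0 else (Nat.totient (ℓ * k) : ℚ) / Nat.totient ℓ, by simp⟩

@[simp] lemma gfun_apply (ℓ k : ℕ) :
    gfun ℓ k = if k = 0 then 0 else (Nat.totient (ℓ * k) : ℚ) / Nat.totient ℓ := rfl

lemma totℓ_ne (ℓ : ℕ) (hℓ : 0 < ℓ) : (Nat.totient ℓ : ℚ) ≠ 0 := by
  have : 0 < Nat.totient ℓ := Nat.totient_pos.mpr hℓ
  positivity

lemma gfun_mult (ℓ : ℕ) (hℓ : 0 < ℓ) : (gfun ℓ).IsMultiplicative := by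
  constructor
  · simp [div_self (totℓ_ne ℓ hℓ)]
  · intro m n hmn
    rcases Nat.eq_zero_or_pos m with rfl | hm
    · have : n = 1 := by simpa [Nat.coprime_zero_left] using hmn
      simp [this]
    rcases Nat.eq_zero_or_pos n with rfl | hn
    · simp
    simp only [gfun_apply, if_neg hm.ne', if_neg hn.ne',
      if_neg (Nat.mul_ne_zero hm.ne' hn.ne')]
    have hne := totℓ_ne ℓ hℓ
    have hkey := key_tot ℓ m n hℓ hmn
    field_simp
    simp only [← mul_assoc] at hkey ⊢
    linear_combination hkey

lemma totient_mul_pow_dvd (ℓ p : ℕ) (hp : p.Prime) (h : p ∣ ℓ) (i : ℕ) :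
    Nat.totient (ℓ * p ^ i) = p ^ i * Nat.totient ℓ := by
  induction i with
  | zero => simp
  | succ j ih =>
    have : ℓ * p ^ (j + 1) = p * (ℓ * p ^ j) := by ring
    rw [this, Nat.totient_mul_of_prime_of_dvd hp (dvd_mul_of_dvd_left h _), ih]
    ring

lemma ffun_eq_gfun (ℓ : ℕ) (hℓ : 0 < ℓ) : ffun ℓ = gfun ℓ := by
  rw [ArithmeticFunction.IsMultiplicative.eq_iff_eq_on_prime_powers (ffun ℓ) (ffun_mult ℓ) (gfun ℓ) (gfun_mult ℓ hℓ)]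
  intro p i hp
  have hp0 : 0 < p := hp.pos
  rw [ffun_apply, Nat.sum_divisors_prime_pow hp]
  by_cases hdvd : p ∣ ℓ
  · -- every prime power ≥ 1 is not coprime to ℓ
    rw [Finset.sum_range_succ']
    have htail : ∀ j ∈ Finset.range i,
        hfun ℓ (p ^ (j + 1)) * ((p ^ i / p ^ (j + 1) : ℕ) : ℚ) = 0 := by
      intro j _
      have hnc : ¬ Nat.Coprime (p ^ (j + 1)) ℓ := by
        intro hc
        have : ¬ p ∣ ℓ := (Nat.Prime.coprime_iff_not_dvd hp).mp
          (Nat.Coprime.coprime_dvd_left (dvd_pow_self p (Nat.succ_ne_zero j)) hc)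
        exact this hdvd
      rw [hfun_apply, if_neg hnc, zero_mul]
    rw [Finset.sum_eq_zero htail, zero_add]
    have hg : Nat.totient (ℓ * p ^ i) = p ^ i * Nat.totient ℓ :=
      totient_mul_pow_dvd ℓ p hp hdvd i
    simp [hfun_apply, Nat.coprime_one_left, hg, pow_ne_zero i hp0.ne',
      mul_div_assoc, div_self (totℓ_ne ℓ hℓ)]
  · -- p coprime to ℓ
    have hcop : Nat.Coprime p ℓ := (Nat.Prime.coprime_iff_not_dvd hp).mpr hdvd
    have hg : Nat.totient (ℓ * p ^ i) = Nat.totient ℓ * Nat.totient (p ^ i) :=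
      Nat.totient_mul (Nat.Coprime.pow_right i hcop.symm)
    have hgval : gfun ℓ (p ^ i) = (Nat.totient (p ^ i) : ℚ) := by
      rw [gfun_apply, if_neg (pow_ne_zero i hp0.ne'), hg]
      push_cast
      rw [mul_comm, mul_div_assoc, div_self (totℓ_ne ℓ hℓ), mul_one]
    rw [hgval]
    rcases Nat.eq_zero_or_pos i with rfl | hi
    · simp
    obtain ⟨j, rfl⟩ := Nat.exists_eq_add_of_lt hi
    rw [zero_add]
    rw [Finset.sum_range_succ', Finset.sum_range_succ']
    have htail : ∀ t ∈ Finset.range j,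
        hfun ℓ (p ^ (t + 1 + 1)) * ((p ^ (j + 1) / p ^ (t + 1 + 1) : ℕ) : ℚ) = 0 := by
      intro t _
      have : moebius (p ^ (t + 2)) = 0 := by
        rw [moebius_apply_prime_pow hp (by omega)]
        simp
      simp [hfun_apply, this]
    rw [Finset.sum_eq_zero htail, zero_add]
    have h1 : hfun ℓ (p ^ (0 + 1)) = (moebius p : ℚ) := by
      rw [hfun_apply, if_pos (Nat.Coprime.pow_left _ hcop), zero_add, pow_one]
    have h0 : hfun ℓ (p ^ 0) = 1 := by simp [hfun_apply]
    rw [h1, h0, moebius_apply_prime hp]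
    have hd1 : p ^ (j + 1) / p ^ 1 = p ^ j := by
      rw [pow_succ, pow_one, Nat.mul_div_cancel _ hp0]
    have hd0 : p ^ (j + 1) / p ^ 0 = p ^ (j + 1) := by simp
    rw [hd1, hd0, Nat.totient_prime_pow hp (Nat.succ_pos j), Nat.succ_sub_one]
    push_cast [Nat.cast_sub hp.one_le]
    ring

lemma lemA_s11 (ℓ k : ℕ) (hℓ : 0 < ℓ) (hk : 0 < k) :
    (Nat.totient ℓ : ℚ) * ffun ℓ k = Nat.totient (ℓ * k) := by
  rw [ffun_eq_gfun ℓ hℓ, gfun_apply, if_neg hk.ne']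
  rw [mul_div_cancel₀ _ (totℓ_ne ℓ hℓ)]

open ArithmeticFunction in
/-- For `ℓ` a positive divisor of a positive integer `n`,
`φ(ℓ) · ∑_{ℓ ∣ d ∣ n} μ(d)·(n/d) = μ(ℓ)·φ(n)`. -/
theorem totient_mul_sum_moebius (n ℓ : ℕ) (hn : 0 < n) (hℓ : 0 < ℓ) (hd : ℓ ∣ n) :
    (Nat.totient ℓ : ℤ) *
        ∑ d ∈ (Nat.divisors n).filter (fun d => ℓ ∣ d),
          moebius d * ((n / d : ℕ) : ℤ)
      = moebius ℓ * Nat.totient n := by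
  obtain ⟨k, rfl⟩ := hd
  have hk : 0 < k := Nat.pos_of_ne_zero fun h => by simp [h] at hn
  have himg : (Nat.divisors (ℓ * k)).filter (fun d => ℓ ∣ d)
      = k.divisors.image (fun m => ℓ * m) := by
    ext d
    simp only [Finset.mem_filter, Nat.mem_divisors, Finset.mem_image]
    constructor
    · rintro ⟨⟨hdvd, _⟩, ⟨m, rfl⟩⟩
      exact ⟨m, ⟨(Nat.mul_dvd_mul_iff_left hℓ).mp hdvd, hk.ne'⟩, rfl⟩
    · rintro ⟨m, ⟨hm, _⟩, rfl⟩
      exact ⟨⟨mul_dvd_mul_left ℓ hm, hn.ne'⟩, Dvd.intro m rfl⟩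
  rw [himg, Finset.sum_image (fun a _ b _ h => mul_left_cancel₀ hℓ.ne' h)]
  have hdiv : ∀ m : ℕ, (ℓ * k) / (ℓ * m) = k / m := fun m =>
    Nat.mul_div_mul_left _ _ hℓ
  simp only [hdiv]
  have hstep : ∀ m : ℕ, (moebius (ℓ * m) : ℚ) = (moebius ℓ : ℚ) * hfun ℓ m := by
    intro m
    by_cases hc : Nat.Coprime ℓ m
    · rw [hfun_apply, if_pos hc.symm]
      have h2 := isMultiplicative_moebius.map_mul_of_coprime hc
      push_cast [h2]; ring
    · rw [hfun_apply, if_neg (fun h => hc h.symm), mul_zero]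
      have hns : ¬ Squarefree (ℓ * m) := fun h => hc (Nat.squarefree_mul_iff.mp h).1
      simp [moebius_eq_zero_of_not_squarefree hns]
  have hsum : ∑ m ∈ k.divisors, (moebius (ℓ * m) : ℚ) * ((k / m : ℕ) : ℚ)
      = (moebius ℓ : ℚ) * ffun ℓ k := by
    rw [ffun_apply, Finset.mul_sum]
    refine Finset.sum_congr rfl fun m _ => ?_
    rw [hstep m]; ring
  have key : ((Nat.totient ℓ : ℚ)) *
        ∑ m ∈ k.divisors, (moebius (ℓ * m) : ℚ) * ((k / m : ℕ) : ℚ)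
      = (moebius ℓ : ℚ) * Nat.totient (ℓ * k) := by
    rw [hsum, ← lemA_s11 ℓ k hℓ hk]; ring
  have final : (((Nat.totient ℓ : ℤ) *
        ∑ m ∈ k.divisors, moebius (ℓ * m) * ((k / m : ℕ) : ℤ) : ℤ) : ℚ)
      = ((moebius ℓ * (Nat.totient (ℓ * k) : ℤ) : ℤ) : ℚ) := by
    push_cast
    push_cast at key
    convert key using 2
    simp only [← Int.natCast_div, Int.cast_natCast]
  exact Int.cast_injective final
end

section
/- Let n, r ≥ 1, let W = {words of length n over an alphabet of r letters} (functions from Fin n to Fin r), let γ be the linear endomorphism of the complex vector space with basis indexed by W that permutes basis vectors by cyclic shift of words, and let ε ∈ ℂ be a primitive n-th root of unity. Then the dimension of the eigenspace of γ with eigenvalue ε equals (1/n)·∑_{d | n} μ(d)·r^{n/d}, where μ denotes the Möbius function. -/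
section Aux

open Fin.NatCast Fin.CommRing

lemma count_fixed_div (n r g : ℕ) [NeZero n] (hg : 0 < g) (hgn : g ∣ n) :
    Fintype.card {v : Fin n → Fin r // ∀ i : Fin n, v (i + (g : Fin n)) = v i}
      = r ^ g := by
  have hn : 0 < n := Nat.pos_of_ne_zero (NeZero.ne n)
  have hgle : g ≤ n := Nat.le_of_dvd hn hgn
  have K : ∀ (v : Fin n → Fin r), (∀ i : Fin n, v (i + (g : Fin n)) = v i) →
      ∀ (q j : ℕ) (hj : j < n), v ⟨(j + q * g) % n, Nat.mod_lt _ hn⟩ = v ⟨j, hj⟩ := by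
    intro v hv q
    induction q with
    | zero => intro j hj; congr 1; exact Fin.ext (by simp [Nat.mod_eq_of_lt hj])
    | succ q ih =>
      intro j hj
      have h1 : (⟨(j + q * g) % n, Nat.mod_lt _ hn⟩ + (g : Fin n) : Fin n)
          = ⟨(j + (q+1) * g) % n, Nat.mod_lt _ hn⟩ := by
        apply Fin.ext
        simp only [Fin.val_add, Fin.val_natCast]
        conv_rhs => rw [show j + (q+1)*g = (j + q*g) + g by ring]
        rw [Nat.add_mod (j + q*g) g n]
      rw [← ih j hj, ← h1, hv]
  have hmodg : ∀ i : Fin n, ((i + (g : Fin n)) : Fin n).val % g = i.val % g := by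
    intro i
    simp only [Fin.val_add, Fin.val_natCast]
    rw [Nat.mod_mod_of_dvd _ hgn]
    rcases eq_or_lt_of_le hgle with h | h
    · subst h; simp [Nat.mod_self]
    · rw [Nat.mod_eq_of_lt h, Nat.add_mod_right]
  have e : {v : Fin n → Fin r // ∀ i : Fin n, v (i + (g : Fin n)) = v i} ≃ (Fin g → Fin r) :=
  { toFun := fun v j => v.1 ⟨j.1, lt_of_lt_of_le j.2 hgle⟩
    invFun := fun w => ⟨fun i => w ⟨i.1 % g, Nat.mod_lt _ hg⟩, by
      intro i; exact congrArg w (Fin.ext (hmodg i))⟩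
    left_inv := by
      rintro ⟨v, hv⟩
      ext i
      simp only
      have := K v hv (i.1 / g) (i.1 % g) (lt_of_lt_of_le (Nat.mod_lt _ hg) hgle)
      rw [show (i.1 % g + i.1 / g * g) = i.1 from Nat.mod_add_div' i.1 g] at this
      rw [show ((⟨i.1 % n, Nat.mod_lt _ hn⟩ : Fin n)) = i from Fin.ext (Nat.mod_eq_of_lt i.2)]
        at this
      exact congrArg Fin.val this.symm
    right_inv := by
      intro w
      funext j
      simp only
      congr 1
      exact Fin.ext (Nat.mod_eq_of_lt j.2) }
  rw [Fintype.card_congr e, Fintype.card_fun, Fintype.card_fin, Fintype.card_fin]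

/-- The set of shifts leaving `v` invariant, as an additive subgroup. -/
def invShifts {n : ℕ} [NeZero n] {r : ℕ} (v : Fin n → Fin r) : AddSubgroup (Fin n) where
  carrier := {c | ∀ i : Fin n, v (i + c) = v i}
  zero_mem' := by intro i; simp
  add_mem' := by
    intro a b ha hb i
    rw [← add_assoc, hb (i + a)]
    exact ha i
  neg_mem' := by
    intro a ha i
    have := ha (i + -a)
    rw [neg_add_cancel_right] at this
    exact this.symm

lemma invShifts_natCast_gcd {n : ℕ} [NeZero n] {r : ℕ} (v : Fin n → Fin r) (k : ℕ) :
    ((k : Fin n) ∈ invShifts v) ↔ ((Nat.gcd n k : Fin n) ∈ invShifts v) := by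
  constructor
  · intro hk
    have hcast : ((Nat.gcd n k : ℕ) : Fin n) = (n.gcdB k) • (k : Fin n) := by
      have := congrArg (fun z : ℤ => (z : Fin n)) (Nat.gcd_eq_gcd_ab n k)
      push_cast at this
      rw [Fin.natCast_self] at this
      simpa [zsmul_eq_mul, mul_comm] using this
    rw [hcast]
    exact AddSubgroup.zsmul_mem _ hk _
  · intro hg
    have hcast : ((k : ℕ) : Fin n) = (k / Nat.gcd n k) • ((Nat.gcd n k : ℕ) : Fin n) := by
      conv_lhs => rw [← Nat.mul_div_cancel' (Nat.gcd_dvd_right n k)]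
      push_cast
      rw [nsmul_eq_mul, mul_comm]
    rw [hcast]
    exact AddSubgroup.nsmul_mem _ hg _

lemma count_fixed (n r k : ℕ) [NeZero n] :
    Fintype.card {v : Fin n → Fin r // ∀ i : Fin n, v (i + (k : Fin n)) = v i}
      = r ^ Nat.gcd n k := by
  rw [← count_fixed_div n r (Nat.gcd n k)
    (Nat.gcd_pos_of_pos_left _ (Nat.pos_of_ne_zero (NeZero.ne n))) (Nat.gcd_dvd_left n k)]
  exact Fintype.card_congr (Equiv.subtypeEquivRight fun v => invShifts_natCast_gcd v k)

open ArithmeticFunction in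
lemma key_sum (n r : ℕ) (hn : n ≠ 0) (ξ : ℂ) (hξ : IsPrimitiveRoot ξ n) :
    ∑ k ∈ Finset.range n, ξ ^ k * (r : ℂ) ^ (Nat.gcd n k) =
      ∑ d ∈ n.divisors, (moebius d : ℂ) * (r : ℂ) ^ (n / d) := by
  set A : ℕ → ℂ := fun m => ∑ d ∈ m.divisors, (moebius d : ℂ) * (r : ℂ) ^ (m / d) with hA
  have step1 : ∀ m : ℕ, 0 < m → ∑ d ∈ m.divisors, A d = (r : ℂ) ^ m := by
    rw [ArithmeticFunction.sum_eq_iff_sum_smul_moebius_eq (g := fun m => (r:ℂ)^m)]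
    intro m hm
    rw [Nat.sum_divisorsAntidiagonal (fun d e => (moebius d : ℤ) • (r:ℂ)^e)]
    simp [hA, zsmul_eq_mul]
  have step2 : ∀ k : ℕ, (r : ℂ) ^ (Nat.gcd n k) = ∑ d ∈ (n.divisors.filter (· ∣ k)), A d := by
    intro k
    have h1 : (Nat.gcd n k).divisors = n.divisors.filter (· ∣ k) := by
      ext d
      simp only [Nat.mem_divisors, Finset.mem_filter, Nat.dvd_gcd_iff]
      constructor
      · rintro ⟨⟨h1, h2⟩, -⟩; exact ⟨⟨h1, hn⟩, h2⟩
      · rintro ⟨⟨h1, -⟩, h2⟩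
        exact ⟨⟨h1, h2⟩, Nat.gcd_ne_zero_left hn⟩
    rw [← h1, step1 _ (Nat.gcd_pos_of_pos_left _ (Nat.pos_of_ne_zero hn))]
  calc ∑ k ∈ Finset.range n, ξ ^ k * (r : ℂ) ^ (Nat.gcd n k)
      = ∑ k ∈ Finset.range n, ∑ d ∈ n.divisors, if d ∣ k then ξ ^ k * A d else 0 := by
        refine Finset.sum_congr rfl fun k _ => ?_
        simp only [step2 k, Finset.sum_filter, Finset.mul_sum, mul_ite, mul_zero]
    _ = ∑ d ∈ n.divisors, ∑ k ∈ Finset.range n, if d ∣ k then ξ ^ k * A d else 0 :=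
        Finset.sum_comm
    _ = ∑ d ∈ n.divisors, (if d = n then 1 else 0) * A d := by
        refine Finset.sum_congr rfl fun d hd => ?_
        obtain ⟨hdn, -⟩ := Nat.mem_divisors.mp hd
        have hd0 : d ≠ 0 := fun h => hn (by simpa [h] using hdn)
        rw [← Finset.sum_filter]
        have himg : (Finset.range n).filter (fun k => d ∣ k)
            = (Finset.range (n / d)).image (fun j => d * j) := by
          ext x
          simp only [Finset.mem_filter, Finset.mem_range, Finset.mem_image]
          constructor
          · rintro ⟨hx, j, rfl⟩
            refine ⟨j, ?_, rfl⟩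
            refine (Nat.mul_lt_mul_left (Nat.pos_of_ne_zero hd0)).mp ?_
            rw [Nat.mul_div_cancel' hdn]
            exact hx
          · rintro ⟨j, hj, rfl⟩
            constructor
            · calc d * j < d * (n / d) :=
                    (Nat.mul_lt_mul_left (Nat.pos_of_ne_zero hd0)).mpr hj
                _ = n := Nat.mul_div_cancel' hdn
            · exact ⟨j, rfl⟩
        rw [himg, Finset.sum_image (by
          intro a _ b _ hab
          exact Nat.eq_of_mul_eq_mul_left (Nat.pos_of_ne_zero hd0) hab)]
        simp only [fun j : ℕ => pow_mul ξ d j, mul_comm]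
        rw [← Finset.sum_mul]
        congr 1
        rcases eq_or_ne d n with h | h
        · subst h
          rw [Nat.div_self (Nat.pos_of_ne_zero hd0)]
          simp
        · rw [if_neg h]
          have hdlt : d < n := lt_of_le_of_ne (Nat.le_of_dvd (Nat.pos_of_ne_zero hn) hdn) h
          have hne1 : ξ ^ d ≠ 1 := by
            intro hcon
            have := hξ.dvd_of_pow_eq_one d hcon
            exact absurd (Nat.le_of_dvd (Nat.pos_of_ne_zero hd0) this) (not_le.mpr hdlt)
          rw [geom_sum_eq hne1, ← pow_mul, Nat.mul_div_cancel' hdn, hξ.pow_eq_one, sub_self,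
            zero_div]
    _ = ∑ d ∈ n.divisors, (moebius d : ℂ) * (r : ℂ) ^ (n / d) := by
        rw [Finset.sum_eq_single_of_mem n (Nat.mem_divisors_self n hn)
          (fun b _ hb => by rw [if_neg hb, zero_mul]), if_pos rfl, one_mul]

lemma trace_funLeft {W : Type*} [Fintype W] [DecidableEq W] (e : W → W) :
    LinearMap.trace ℂ (W → ℂ) (LinearMap.funLeft ℂ ℂ e)
      = Fintype.card {v : W // e v = v} := by
  classical
  rw [LinearMap.trace_eq_matrix_trace ℂ (Pi.basisFun ℂ W), Matrix.trace]
  have hdiag : ∀ v : W, ((LinearMap.toMatrix (Pi.basisFun ℂ W) (Pi.basisFun ℂ W))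
      (LinearMap.funLeft ℂ ℂ e)).diag v = if e v = v then 1 else 0 := by
    intro v
    rw [Matrix.diag_apply, LinearMap.toMatrix_apply, Pi.basisFun_repr,
      LinearMap.funLeft_apply, Pi.basisFun_apply]
    simp [Pi.single_apply, eq_comm]
  rw [Finset.sum_congr rfl fun v _ => hdiag v, Finset.sum_boole, Fintype.card_subtype]

end Aux

open Fin.NatCast Fin.CommRing in
open ArithmeticFunction in
/-- Let `γ` be the linear endomorphism of the complex vector space with basis
the words of length `n` over `r` letters, permuting basis vectors by cyclic
shift, and let `ε` be a primitive `n`-th root of unity. Then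
`n · dim (eigenspace of γ for ε) = ∑_{d ∣ n} μ(d) r^{n/d}`. -/
theorem dim_eigenspace_cyclic_shift (n r : ℕ) [NeZero n] (hr : 1 ≤ r)
    (ε : ℂ) (hε : IsPrimitiveRoot ε n) :
    (n : ℤ) * Module.finrank ℂ
        ↥(Module.End.eigenspace
          (LinearMap.funLeft ℂ ℂ
            (fun (v : Fin n → Fin r) (i : Fin n) => v (i - 1)) :
              Module.End ℂ ((Fin n → Fin r) → ℂ)) ε) =
      ∑ d ∈ Nat.divisors n, moebius d * (r : ℤ) ^ (n / d) := by
  classical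
  have hn : n ≠ 0 := NeZero.ne n
  have hε0 : ε ≠ 0 := hε.ne_zero hn
  set W := Fin n → Fin r with hW
  set s : ℕ → W → W := fun m v i => v (i - (m : Fin n)) with hs
  set γ : Module.End ℂ (W → ℂ) := LinearMap.funLeft ℂ ℂ (s 1) with hγ
  have hγ1 : (LinearMap.funLeft ℂ ℂ (fun (v : Fin n → Fin r) (i : Fin n) => v (i - 1)) :
      Module.End ℂ ((Fin n → Fin r) → ℂ)) = γ := by
    rw [hγ]
    congr 1
  rw [hγ1]
  -- powers of γ
  have hpow : ∀ m : ℕ, γ ^ m = LinearMap.funLeft ℂ ℂ (s m) := by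
    intro m
    induction m with
    | zero =>
      rw [pow_zero]
      have h0 : s 0 = _root_.id := by funext v i; simp [hs]
      rw [h0]
      exact LinearMap.ext fun g => rfl
    | succ m ih =>
      have hcomp : s 1 ∘ s m = s (m+1) := by
        funext v i
        simp only [hs, Function.comp_apply]
        congr 1
        rw [sub_sub]
        congr 1
        push_cast
        ring
      rw [pow_succ, Module.End.mul_eq_comp, ih, hγ, ← LinearMap.funLeft_comp, hcomp]
  set ξ : ℂ := ε⁻¹ with hξdef
  have hξ : IsPrimitiveRoot ξ n := hε.inv
  have hξε : ξ * ε = 1 := inv_mul_cancel₀ hε0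
  set P : Module.End ℂ (W → ℂ) :=
    (n : ℂ)⁻¹ • ∑ k ∈ Finset.range n, ξ ^ k • γ ^ k with hP
  -- the commutation relation
  have hcomm : γ * P = ε • P := by
    rw [hP, mul_smul_comm, Finset.mul_sum]
    rw [smul_comm (ε) ((n:ℂ)⁻¹)]
    congr 1
    have h1 : ∀ k : ℕ, γ * (ξ ^ k • γ ^ k) = ε • (ξ ^ (k+1) • γ ^ (k+1)) := by
      intro k
      rw [mul_smul_comm, smul_smul, ← pow_succ']
      congr 1
      rw [pow_succ', ← mul_assoc, mul_comm ε ξ, hξε, one_mul]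
    rw [Finset.sum_congr rfl fun k _ => h1 k, ← Finset.smul_sum]
    congr 1
    have haz : ξ ^ n • γ ^ n = ξ ^ 0 • γ ^ 0 := by
      have hsn : s n = _root_.id := by
        funext v i
        simp [hs, Fin.natCast_self]
      rw [hξ.pow_eq_one, pow_zero, pow_zero, one_smul, one_smul, hpow n, hsn]
      exact LinearMap.ext fun g => rfl
    have e1 := Finset.sum_range_succ' (fun k => ξ ^ k • γ ^ k) n
    have e2 := Finset.sum_range_succ (fun k => ξ ^ k • γ ^ k) n
    rw [e2] at e1
    rw [haz] at e1
    exact (add_right_cancel e1).symm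
  -- P is a projection onto the eigenspace
  have hProj : LinearMap.IsProj (Module.End.eigenspace γ ε) P := by
    constructor
    · intro x
      rw [Module.End.mem_eigenspace_iff]
      have h1 : γ (P x) = (γ * P) x := rfl
      rw [h1, hcomm]
      rfl
    · intro x hx
      rw [Module.End.mem_eigenspace_iff] at hx
      have hk : ∀ k : ℕ, (γ ^ k) x = ε ^ k • x := by
        intro k
        induction k with
        | zero => simp
        | succ k ih =>
          rw [pow_succ', Module.End.mul_eq_comp, LinearMap.comp_apply, ih, map_smul, hx,
            smul_smul, ← pow_succ]
      show P x = x
      rw [hP]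
      simp only [LinearMap.smul_apply, LinearMap.coe_sum, Finset.sum_apply]
      have : ∀ k ∈ Finset.range n, ξ ^ k • (γ ^ k) x = x := by
        intro k _
        rw [hk k, smul_smul, ← mul_pow, hξε, one_pow, one_smul]
      rw [Finset.sum_congr rfl this, Finset.sum_const, Finset.card_range,
        ← Nat.cast_smul_eq_nsmul ℂ, smul_smul,
        inv_mul_cancel₀ (show (n:ℂ) ≠ 0 by exact_mod_cast hn), one_smul]
  -- trace of P equals the dimension of the eigenspace
  have htr := hProj.trace
  -- trace of P computed via fixed points
  have hfix : ∀ k : ℕ, (LinearMap.trace ℂ (W → ℂ)) (γ ^ k) = ((r : ℂ)) ^ (Nat.gcd n k) := by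
    intro k
    rw [hpow k, trace_funLeft]
    have hiff : ∀ v : W, (s k v = v) ↔ (∀ i : Fin n, v (i + (k : Fin n)) = v i) := by
      intro v
      rw [funext_iff]
      constructor
      · intro h i
        have := h (i + (k : Fin n))
        rw [hs] at this
        simp only [add_sub_cancel_right] at this
        exact this.symm
      · intro h i
        rw [hs]
        simp only
        have := h (i - (k : Fin n))
        rw [sub_add_cancel] at this
        exact this.symm
    rw [Fintype.card_congr (Equiv.subtypeEquivRight hiff), count_fixed n r k]
    push_cast
    ring
  have htrP : (LinearMap.trace ℂ (W → ℂ)) P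
      = (n : ℂ)⁻¹ * ∑ k ∈ Finset.range n, ξ ^ k * (r : ℂ) ^ (Nat.gcd n k) := by
    rw [hP, map_smul, map_sum, smul_eq_mul]
    congr 1
    refine Finset.sum_congr rfl fun k _ => ?_
    rw [map_smul, hfix k, smul_eq_mul]
  -- put everything together over ℂ
  have hC : (n : ℂ) * (Module.finrank ℂ ↥(Module.End.eigenspace γ ε) : ℂ)
      = ∑ d ∈ n.divisors, (moebius d : ℂ) * (r : ℂ) ^ (n / d) := by
    rw [← htr, htrP, ← mul_assoc, mul_inv_cancel₀ (by exact_mod_cast hn), one_mul]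
    exact key_sum n r hn ξ hξ
  exact_mod_cast hC
end
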